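/- Let σ : S → A and τ : T → A be maps of event structures, and S ∧ T their interaction with the maps Π₁ : S ∧ T → S and Π₂ : S ∧ T → T sending a prime secured bijection with top element (s, t) to s and t respectively. Then σ ∘ Π₁ = τ ∘ Π₂, and (S ∧ T, Π₁, Π₂) is a pullback of σ and τ in the category of event structures: for every event structure X and maps α : X → S, β : X → T with σ ∘ α = τ ∘ β there is a unique map ⟨α, β⟩ : X → S ∧ T with Π₁ ∘ ⟨α, β⟩ = α and Π₂ ∘ ⟨α, β⟩ = β. -/

import Mathlib

/-- An event structure presented as raw data: a set of events, a causality
relation and a consistency predicate on (finite) sets of events. -/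
structure ES where
  Evt : Type
  le : Evt → Evt → Prop
  Con : Set (Set Evt)

namespace ES

/-- Strict causality. -/
def lt (E : ES) (a b : E.Evt) : Prop := E.le a b ∧ a ≠ b

/-- The axioms of event structures: `le` is a partial order, causes `[e]` are
finite, consistency is a nonempty collection of finite sets, closed under
subsets, containing all singletons, and closed under adding causal
dependencies. -/
def IsES (E : ES) : Prop :=
  (∀ e, E.le e e) ∧
  (∀ a b c, E.le a b → E.le b c → E.le a c) ∧
  (∀ a b, E.le a b → E.le b a → a = b) ∧
  (∀ e, {e' | E.le e' e}.Finite) ∧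
  E.Con.Nonempty ∧
  (∀ X ∈ E.Con, X.Finite) ∧
  (∀ e, ({e} : Set E.Evt) ∈ E.Con) ∧
  (∀ X ∈ E.Con, ∀ Y, Y ⊆ X → Y ∈ E.Con) ∧
  (∀ X ∈ E.Con, ∀ e ∈ X, ∀ e', E.le e' e → insert e' X ∈ E.Con)

/-- A (finite) configuration: a finite, consistent and down-closed set of events. -/
def Config (E : ES) (x : Set E.Evt) : Prop :=
  x.Finite ∧ (∀ Y, Y ⊆ x → Y.Finite → Y ∈ E.Con) ∧
  ∀ e ∈ x, ∀ e', E.le e' e → e' ∈ x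

/-- Immediate causality `e ⇢ e'`. -/
def imc (E : ES) (a b : E.Evt) : Prop :=
  E.lt a b ∧ ∀ c, E.le a c → E.le c b → c = a ∨ c = b

/-- Simple parallel composition of event structures. -/
def par (E F : ES) : ES where
  Evt := E.Evt ⊕ F.Evt
  le := fun p q =>
    match p, q with
    | Sum.inl a, Sum.inl b => E.le a b
    | Sum.inr a, Sum.inr b => F.le a b
    | _, _ => False
  Con := {X | Sum.inl ⁻¹' X ∈ E.Con ∧ Sum.inr ⁻¹' X ∈ F.Con}

/-- Projection (hiding): restrict an event structure to a subset `V` of events. -/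
def proj (E : ES) (V : Set E.Evt) : ES where
  Evt := ↥V
  le := fun a b => E.le a.val b.val
  Con := {X | Subtype.val '' X ∈ E.Con}

end ES

/-- A (total) map of event structures: preserves configurations and is
injective on each configuration. -/
def IsMap (E F : ES) (f : E.Evt → F.Evt) : Prop :=
  (∀ x, E.Config x → F.Config (f '' x)) ∧ ∀ x, E.Config x → Set.InjOn f x
/-- The relation `◁` generating the order on the graph `G` of a bijection:
`p ◁ q` when both are in `G` and `p.1 <_S q.1` or `p.2 <_T q.2`. -/
def gRel (S T : ES) (G : Set (S.Evt × T.Evt)) :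
    (S.Evt × T.Evt) → (S.Evt × T.Evt) → Prop :=
  fun p q => p ∈ G ∧ q ∈ G ∧ (S.lt p.1 q.1 ∨ T.lt p.2 q.2)

/-- The graph `G` is secured: the reflexive-transitive closure of `◁` on `G`
is antisymmetric (hence a partial order). -/
def SecuredOn (S T : ES) (G : Set (S.Evt × T.Evt)) : Prop :=
  ∀ p q, Relation.ReflTransGen (gRel S T G) p q →
    Relation.ReflTransGen (gRel S T G) q p → p = q

/-- `G` is (the graph of) a secured bijection `φ : x ≃ σ x = τ y ≃ y` between
configurations `x ∈ C(S)` and `y ∈ C(T)`, an element of `SB(σ, τ)`. -/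
def IsSecBij (S T A : ES) (σ : S.Evt → A.Evt) (τ : T.Evt → A.Evt)
    (G : Set (S.Evt × T.Evt)) : Prop :=
  S.Config (Prod.fst '' G) ∧ T.Config (Prod.snd '' G) ∧
  (∀ p ∈ G, σ p.1 = τ p.2) ∧
  (∀ s ∈ Prod.fst '' G, ∀ t ∈ Prod.snd '' G, σ s = τ t → (s, t) ∈ G) ∧
  σ '' (Prod.fst '' G) = τ '' (Prod.snd '' G) ∧
  SecuredOn S T G

/-- `G` has a top (greatest) element for the induced order. -/
def IsPrime (S T : ES) (G : Set (S.Evt × T.Evt)) : Prop :=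
  ∃ p ∈ G, ∀ q ∈ G, Relation.ReflTransGen (gRel S T G) q p

/-- The interaction `S ∧ T` of `σ : S → A` and `τ : T → A`: events are the
prime secured bijections, causality is inclusion of graphs, and a finite set
of events is consistent when the union of their graphs is a secured bijection. -/
def Interaction (S T A : ES) (σ : S.Evt → A.Evt) (τ : T.Evt → A.Evt) : ES where
  Evt := {G : Set (S.Evt × T.Evt) // IsSecBij S T A σ τ G ∧ IsPrime S T G}
  le := fun G G' => G.val ⊆ G'.val
  Con := {X | X.Finite ∧ IsSecBij S T A σ τ (⋃ G ∈ X, G.val)}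

/-- The top synchronized event of a prime secured bijection. -/
noncomputable def primeTop (S T A : ES) (σ : S.Evt → A.Evt) (τ : T.Evt → A.Evt)
    (G : (Interaction S T A σ τ).Evt) : S.Evt × T.Evt :=
  G.prop.2.choose

/-- The first projection `Π₁ : S ∧ T → S`. -/
noncomputable def InterPi1 (S T A : ES) (σ : S.Evt → A.Evt) (τ : T.Evt → A.Evt)
    (G : (Interaction S T A σ τ).Evt) : S.Evt :=
  (primeTop S T A σ τ G).1

/-- The second projection `Π₂ : S ∧ T → T`. -/
noncomputable def InterPi2 (S T A : ES) (σ : S.Evt → A.Evt) (τ : T.Evt → A.Evt)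
    (G : (Interaction S T A σ τ).Evt) : T.Evt :=
  (primeTop S T A σ τ G).2

section AuxPullback

open Relation

/-- The causal history `[e]` is a configuration. -/
lemma cfg_down {X : ES} (hX : X.IsES) (e : X.Evt) : X.Config {e' | X.le e' e} := by
  obtain ⟨hrefl, htrans, -, hfin, -, -, hsing, hsub, hins⟩ := hX
  have hins' : insert e {e' | X.le e' e} ∈ X.Con := by
    refine Set.Finite.induction_on_subset (motive := fun F _ => insert e F ∈ X.Con) _ (hfin e) ?_ ?_
    · simpa using hsing e
    · intro a F haS _ _ ih
      have h2 : insert a (insert e F) ∈ X.Con :=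
        hins _ ih e (Set.mem_insert e F) a haS
      rwa [Set.insert_comm] at h2
  have hDcon : {e' | X.le e' e} ∈ X.Con := by
    rwa [Set.insert_eq_self.2 (show e ∈ {e' | X.le e' e} from hrefl e)] at hins'
  refine ⟨hfin e, fun Y hY _ => hsub _ hDcon Y hY, fun a ha e' he' => htrans e' a e he' ha⟩

/-- Maps of event structures reflect causality within a configuration. -/
lemma map_reflect {X S : ES} (hX : X.IsES) {f : X.Evt → S.Evt} (hf : IsMap X S f)
    {x : Set X.Evt} (hx : X.Config x) {a b : X.Evt}
    (ha : a ∈ x) (hb : b ∈ x) (hab : S.le (f a) (f b)) : X.le a b := by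
  have hD : X.Config {e' | X.le e' b} := cfg_down hX b
  have hDx : {e' | X.le e' b} ⊆ x := fun e' he' => hx.2.2 b hb e' he'
  have hconf := hf.1 _ hD
  have hfb : f b ∈ f '' {e' | X.le e' b} := ⟨b, hX.1 b, rfl⟩
  have : f a ∈ f '' {e' | X.le e' b} := hconf.2.2 (f b) hfb (f a) hab
  obtain ⟨c, hc, hfc⟩ := this
  have hac : a = c := hf.2 x hx ha (hDx hc) hfc.symm
  exact hac ▸ hc

lemma rtg_mono {S T : ES} {G G' : Set (S.Evt × T.Evt)} (h : G ⊆ G') {p q}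
    (hr : ReflTransGen (gRel S T G) p q) : ReflTransGen (gRel S T G') p q :=
  by refine ReflTransGen.mono ?_ p q hr; intro _ _ hab; exact ⟨h hab.1, h hab.2.1, hab.2.2⟩

lemma secured_mono {S T : ES} {G G' : Set (S.Evt × T.Evt)} (h : G ⊆ G')
    (hG' : SecuredOn S T G') : SecuredOn S T G :=
  fun p q h1 h2 => hG' p q (rtg_mono h h1) (rtg_mono h h2)

lemma sb_fst_inj {S T A : ES} {σ : S.Evt → A.Evt} {τ : T.Evt → A.Evt}
    (hτ : IsMap T A τ) {G} (hG : IsSecBij S T A σ τ G) :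
    Set.InjOn Prod.fst G := by
  intro p hp q hq hpq
  have h1 := hG.2.2.1 p hp
  have h2 := hG.2.2.1 q hq
  have h3 : τ p.2 = τ q.2 := by rw [← h1, ← h2, hpq]
  have h4 : p.2 = q.2 := hτ.2 _ hG.2.1 ⟨p, hp, rfl⟩ ⟨q, hq, rfl⟩ h3
  exact Prod.ext hpq h4

lemma sb_snd_inj {S T A : ES} {σ : S.Evt → A.Evt} {τ : T.Evt → A.Evt}
    (hσ : IsMap S A σ) {G} (hG : IsSecBij S T A σ τ G) :
    Set.InjOn Prod.snd G := by
  intro p hp q hq hpq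
  have h1 := hG.2.2.1 p hp
  have h2 := hG.2.2.1 q hq
  have h3 : σ p.1 = σ q.1 := by rw [h1, h2, hpq]
  have h4 : p.1 = q.1 := hσ.2 _ hG.1 ⟨p, hp, rfl⟩ ⟨q, hq, rfl⟩ h3
  exact Prod.ext h4 hpq

lemma sb_eq_img {S T A : ES} {σ : S.Evt → A.Evt} {τ : T.Evt → A.Evt}
    (W : Set (S.Evt × T.Evt)) (h3 : ∀ p ∈ W, σ p.1 = τ p.2) :
    σ '' (Prod.fst '' W) = τ '' (Prod.snd '' W) := by
  ext u
  constructor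
  · rintro ⟨s, ⟨q, hq, rfl⟩, rfl⟩
    exact ⟨q.2, ⟨q, hq, rfl⟩, (h3 q hq).symm⟩
  · rintro ⟨t, ⟨q, hq, rfl⟩, rfl⟩
    exact ⟨q.1, ⟨q, hq, rfl⟩, h3 q hq⟩

/-- The down-set of `p` in a secured bijection `G`. -/
def downIn {S T : ES} (G : Set (S.Evt × T.Evt)) (p : S.Evt × T.Evt) :
    Set (S.Evt × T.Evt) :=
  {q | q ∈ G ∧ Relation.ReflTransGen (gRel S T G) q p}

lemma downIn_subset {S T : ES} (G : Set (S.Evt × T.Evt)) (p) :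
    downIn G p ⊆ G := fun _ hq => hq.1

lemma rtg_downIn {S T : ES} {G : Set (S.Evt × T.Evt)} {p q}
    (h : ReflTransGen (gRel S T G) q p) :
    ReflTransGen (gRel S T (downIn G p)) q p := by
  induction h using ReflTransGen.head_induction_on with
  | refl => exact ReflTransGen.refl
  | @head a c h' hrest ih =>
      exact ReflTransGen.head
        ⟨⟨h'.1, ReflTransGen.head h' hrest⟩, ⟨h'.2.1, hrest⟩, h'.2.2⟩ ih

/-- The down-set of an element of a secured bijection is a prime secured
bijection with that element as top. -/
lemma down_sec {S T A : ES} {σ : S.Evt → A.Evt} {τ : T.Evt → A.Evt}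
    (hσ : IsMap S A σ) (hτ : IsMap T A τ)
    {G} (hG : IsSecBij S T A σ τ G) {p} (hp : p ∈ G) :
    IsSecBij S T A σ τ (downIn G p) ∧ p ∈ downIn G p ∧
      ∀ q ∈ downIn G p, ReflTransGen (gRel S T (downIn G p)) q p := by
  have hsubG : downIn G p ⊆ G := downIn_subset G p
  have hfstsub : Prod.fst '' downIn G p ⊆ Prod.fst '' G := Set.image_mono hsubG
  have hsndsub : Prod.snd '' downIn G p ⊆ Prod.snd '' G := Set.image_mono hsubG
  have hpd : p ∈ downIn G p := ⟨hp, ReflTransGen.refl⟩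
  refine ⟨⟨?_, ?_, ?_, ?_, ?_, secured_mono hsubG hG.2.2.2.2.2⟩, hpd,
    fun q hq => rtg_downIn hq.2⟩
  · refine ⟨hG.1.1.subset hfstsub, fun Y hY hYf => hG.1.2.1 Y (hY.trans hfstsub) hYf, ?_⟩
    rintro s ⟨q, hq, rfl⟩ s' hs'
    by_cases hss : s' = q.1
    · exact ⟨q, hq, hss.symm⟩
    · obtain ⟨q', hq', hq'1⟩ := hG.1.2.2 q.1 ⟨q, hsubG hq, rfl⟩ s' hs'
      have hstep : gRel S T G q' q :=
        ⟨hq', hsubG hq, Or.inl ⟨hq'1 ▸ hs', fun h => hss (hq'1 ▸ h)⟩⟩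
      exact ⟨q', ⟨hq', ReflTransGen.head hstep hq.2⟩, hq'1⟩
  · refine ⟨hG.2.1.1.subset hsndsub, fun Y hY hYf => hG.2.1.2.1 Y (hY.trans hsndsub) hYf, ?_⟩
    rintro t ⟨q, hq, rfl⟩ t' ht'
    by_cases htt : t' = q.2
    · exact ⟨q, hq, htt.symm⟩
    · obtain ⟨q', hq', hq'2⟩ := hG.2.1.2.2 q.2 ⟨q, hsubG hq, rfl⟩ t' ht'
      have hstep : gRel S T G q' q :=
        ⟨hq', hsubG hq, Or.inr ⟨hq'2 ▸ ht', fun h => htt (hq'2 ▸ h)⟩⟩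
      exact ⟨q', ⟨hq', ReflTransGen.head hstep hq.2⟩, hq'2⟩
  · exact fun q hq => hG.2.2.1 q (hsubG hq)
  · rintro s ⟨q1, hq1, rfl⟩ t ⟨q2, hq2, rfl⟩ hst
    have e1 := hG.2.2.1 q1 (hsubG hq1)
    have e2 : τ q1.2 = τ q2.2 := by rw [← e1, hst]
    have : q1.2 = q2.2 := hτ.2 _ hG.2.1 ⟨q1, hsubG hq1, rfl⟩ ⟨q2, hsubG hq2, rfl⟩ e2
    have hq12 : q1 = q2 := sb_snd_inj hσ hG (hsubG hq1) (hsubG hq2) this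
    have : (q1.1, q2.2) = q1 := by rw [hq12]
    exact this ▸ hq1
  · exact sb_eq_img _ (fun q hq => hG.2.2.1 q (hsubG hq))

/-- A prime secured bijection contained in a secured bijection `U` equals the
down-set of its top in `U`. -/
lemma prime_eq_downIn {S T A : ES} {σ : S.Evt → A.Evt} {τ : T.Evt → A.Evt}
    (hσ : IsMap S A σ) (hτ : IsMap T A τ)
    {U G : Set (S.Evt × T.Evt)} (hU : IsSecBij S T A σ τ U)
    (hG : IsSecBij S T A σ τ G) (hGU : G ⊆ U) {p} (hp : p ∈ G)
    (htop : ∀ q ∈ G, ReflTransGen (gRel S T G) q p) :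
    G = downIn U p := by
  ext q
  constructor
  · intro hq
    exact ⟨hGU hq, rtg_mono hGU (htop q hq)⟩
  · rintro ⟨hqU, hrtg⟩
    clear hqU
    induction hrtg using ReflTransGen.head_induction_on with
    | refl => exact hp
    | @head a c h' hrest ih =>
        rcases h'.2.2 with hlt | hlt
        · obtain ⟨q', hq', h1⟩ := hG.1.2.2 c.1 ⟨c, ih, rfl⟩ a.1 hlt.1
          exact (sb_fst_inj hτ hU (hGU hq') h'.1 h1) ▸ hq'
        · obtain ⟨q', hq', h1⟩ := hG.2.1.2.2 c.2 ⟨c, ih, rfl⟩ a.2 hlt.1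
          exact (sb_snd_inj hσ hU (hGU hq') h'.1 h1) ▸ hq'

/-- `primeTop` is the unique top. -/
lemma primeTop_eq {S T A : ES} {σ : S.Evt → A.Evt} {τ : T.Evt → A.Evt}
    (G : (Interaction S T A σ τ).Evt) {p}
    (hp : p ∈ G.val) (htop : ∀ q ∈ G.val, ReflTransGen (gRel S T G.val) q p) :
    primeTop S T A σ τ G = p := by
  obtain ⟨hc, hctop⟩ := G.prop.2.choose_spec
  exact G.prop.1.2.2.2.2.2 _ _ (htop _ hc) (hctop _ hp)

lemma primeTop_mem {S T A : ES} {σ : S.Evt → A.Evt} {τ : T.Evt → A.Evt}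
    (G : (Interaction S T A σ τ).Evt) : primeTop S T A σ τ G ∈ G.val :=
  G.prop.2.choose_spec.1

lemma primeTop_top {S T A : ES} {σ : S.Evt → A.Evt} {τ : T.Evt → A.Evt}
    (G : (Interaction S T A σ τ).Evt) :
    ∀ q ∈ G.val, ReflTransGen (gRel S T G.val) q (primeTop S T A σ τ G) :=
  G.prop.2.choose_spec.2

/-- Projections of a configuration of the interaction are the projections of
the union of the graphs. -/
lemma proj_img {S T A : ES} {σ : S.Evt → A.Evt} {τ : T.Evt → A.Evt}
    (hσ : IsMap S A σ) (hτ : IsMap T A τ)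
    {y : Set (Interaction S T A σ τ).Evt} (hy : (Interaction S T A σ τ).Config y) :
    InterPi1 S T A σ τ '' y = Prod.fst '' (⋃ G ∈ y, G.val) ∧
    InterPi2 S T A σ τ '' y = Prod.snd '' (⋃ G ∈ y, G.val) := by
  have hyCon : y ∈ (Interaction S T A σ τ).Con := hy.2.1 y subset_rfl hy.1
  have hU : IsSecBij S T A σ τ (⋃ G ∈ y, G.val) := hyCon.2
  have main : ∀ G ∈ y, ∀ p ∈ G.val,
      ∃ G' ∈ y, primeTop S T A σ τ G' = p := by
    intro G hG p hp
    obtain ⟨hsb, hmem, htop⟩ := down_sec hσ hτ G.prop.1 hp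
    refine ⟨⟨downIn G.val p, hsb, p, hmem, htop⟩, ?_, primeTop_eq _ hmem htop⟩
    exact hy.2.2 G hG _ (downIn_subset G.val p)
  constructor
  · ext s
    constructor
    · rintro ⟨G, hG, rfl⟩
      exact ⟨primeTop S T A σ τ G, Set.mem_biUnion hG (primeTop_mem G), rfl⟩
    · rintro ⟨p, hp, rfl⟩
      obtain ⟨G, hG, hpG⟩ := Set.mem_iUnion₂.1 hp
      obtain ⟨G', hG', hG'top⟩ := main G hG p hpG
      exact ⟨G', hG', by rw [InterPi1, hG'top]⟩
  · ext t
    constructor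
    · rintro ⟨G, hG, rfl⟩
      exact ⟨primeTop S T A σ τ G, Set.mem_biUnion hG (primeTop_mem G), rfl⟩
    · rintro ⟨p, hp, rfl⟩
      obtain ⟨G, hG, hpG⟩ := Set.mem_iUnion₂.1 hp
      obtain ⟨G', hG', hG'top⟩ := main G hG p hpG
      exact ⟨G', hG', by rw [InterPi2, hG'top]⟩

/-- Any suitably down-closed subset of the graph of a synchronized
configuration is a secured bijection. -/
lemma union_sb {S T A X : ES} (hX : X.IsES)
    {σ : S.Evt → A.Evt} {τ : T.Evt → A.Evt} {α : X.Evt → S.Evt} {β : X.Evt → T.Evt}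
    (hσ : IsMap S A σ) (hα : IsMap X S α) (hβ : IsMap X T β)
    (hcompat : ∀ e, σ (α e) = τ (β e))
    {x : Set X.Evt} (hx : X.Config x)
    {W : Set (S.Evt × T.Evt)} (hW : W ⊆ (fun a => (α a, β a)) '' x)
    (hfst : ∀ p ∈ W, ∀ s', S.le s' p.1 → ∃ q ∈ W, q.1 = s')
    (hsnd : ∀ p ∈ W, ∀ t', T.le t' p.2 → ∃ q ∈ W, q.2 = t') :
    IsSecBij S T A σ τ W := by
  have hFx : Prod.fst '' ((fun a => (α a, β a)) '' x) = α '' x := by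
    rw [Set.image_image]
  have hGx : Prod.snd '' ((fun a => (α a, β a)) '' x) = β '' x := by
    rw [Set.image_image]
  have hfsub : Prod.fst '' W ⊆ α '' x := hFx ▸ Set.image_mono hW
  have hssub : Prod.snd '' W ⊆ β '' x := hGx ▸ Set.image_mono hW
  have hacfg := hα.1 x hx
  have hbcfg := hβ.1 x hx
  refine ⟨?_, ?_, ?_, ?_, ?_, ?_⟩
  · refine ⟨hacfg.1.subset hfsub, fun Y hY hYf => hacfg.2.1 Y (hY.trans hfsub) hYf, ?_⟩
    rintro s ⟨q, hq, rfl⟩ s' hs'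
    obtain ⟨q', hq', h1⟩ := hfst q hq s' hs'
    exact ⟨q', hq', h1⟩
  · refine ⟨hbcfg.1.subset hssub, fun Y hY hYf => hbcfg.2.1 Y (hY.trans hssub) hYf, ?_⟩
    rintro t ⟨q, hq, rfl⟩ t' ht'
    obtain ⟨q', hq', h1⟩ := hsnd q hq t' ht'
    exact ⟨q', hq', h1⟩
  · intro p hp
    obtain ⟨a, _, rfl⟩ := hW hp
    exact hcompat a
  · rintro s ⟨q1, hq1, rfl⟩ t ⟨q2, hq2, rfl⟩ hst
    obtain ⟨a, ha, rfl⟩ := hW hq1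
    obtain ⟨b, hb, rfl⟩ := hW hq2
    have h1 : σ (α a) = σ (α b) := by
      rw [hst]; exact (hcompat b).symm
    have h2 : α a = α b := hσ.2 _ hacfg ⟨a, ha, rfl⟩ ⟨b, hb, rfl⟩ h1
    have hab : a = b := hα.2 x hx ha hb h2
    subst hab
    simpa using hq1
  · exact sb_eq_img _ (fun p hp => by obtain ⟨a, _, rfl⟩ := hW hp; exact hcompat a)
  · -- securedness
    have htrans := hX.2.1
    have hanti := hX.2.2.1
    have hFinj : Set.InjOn (fun a => (α a, β a)) x :=
      fun a ha b hb hab => hα.2 x hx ha hb (congrArg Prod.fst hab)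
    have step : ∀ p q, gRel S T W p q →
        ∃ a, a ∈ x ∧ ∃ b, b ∈ x ∧ (α a, β a) = p ∧ (α b, β b) = q ∧ X.lt a b := by
      rintro p q ⟨hp, hq, ho⟩
      obtain ⟨a, ha, rfl⟩ := hW hp
      obtain ⟨b, hb, rfl⟩ := hW hq
      refine ⟨a, ha, b, hb, rfl, rfl, ?_⟩
      rcases ho with hlt | hlt
      · exact ⟨map_reflect hX hα hx ha hb hlt.1, fun hab => hlt.2 (by rw [hab])⟩
      · exact ⟨map_reflect hX hβ hx ha hb hlt.1, fun hab => hlt.2 (by rw [hab])⟩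
    have chain : ∀ p q, Relation.ReflTransGen (gRel S T W) p q →
        p = q ∨ ∃ a, a ∈ x ∧ ∃ b, b ∈ x ∧ (α a, β a) = p ∧ (α b, β b) = q ∧ X.lt a b := by
      intro p q hpq
      induction hpq with
      | refl => exact Or.inl rfl
      | tail hpr hrq ih =>
          obtain ⟨b, hb, c, hc, hFb, hFc, hbc⟩ := step _ _ hrq
          rcases ih with rfl | ⟨a, ha, b', hb', hFa, hFb', hab⟩
          · exact Or.inr ⟨b, hb, c, hc, hFb, hFc, hbc⟩
          · have hbb : b' = b := hFinj hb' hb (show (α b', β b') = (α b, β b) by rw [hFb', hFb])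
            subst hbb
            refine Or.inr ⟨a, ha, c, hc, hFa, hFc, htrans a b' c hab.1 hbc.1, ?_⟩
            intro hac
            exact hbc.2 (hanti b' c hbc.1 (hac ▸ hab.1))
    intro p q h1 h2
    rcases chain p q h1 with rfl | ⟨a, ha, b, hb, hFa, hFb, hab⟩
    · rfl
    rcases chain q p h2 with h | ⟨b2, hb2, a2, ha2, hFb2, hFa2, hba⟩
    · exact h.symm
    have hb2b : b2 = b := hFinj hb2 hb (show (α b2, β b2) = (α b, β b) by rw [hFb2, hFb])
    have ha2a : a2 = a := hFinj ha2 ha (show (α a2, β a2) = (α a, β a) by rw [hFa2, hFa])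
    rw [hb2b, ha2a] at hba
    exact absurd (hanti a b hab.1 hba.1) hab.2

end AuxPullback

/-- `(S ∧ T, Π₁, Π₂)` is a pullback of `σ` and `τ` in the
category of event structures. -/
theorem interaction_is_pullback
    (S T A : ES) (hS : S.IsES) (hT : T.IsES) (hA : A.IsES)
    (σ : S.Evt → A.Evt) (τ : T.Evt → A.Evt)
    (hσ : IsMap S A σ) (hτ : IsMap T A τ) :
    (∀ G, σ (InterPi1 S T A σ τ G) = τ (InterPi2 S T A σ τ G)) ∧
    IsMap (Interaction S T A σ τ) S (InterPi1 S T A σ τ) ∧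
    IsMap (Interaction S T A σ τ) T (InterPi2 S T A σ τ) ∧
    ∀ (X : ES), X.IsES → ∀ (α : X.Evt → S.Evt) (β : X.Evt → T.Evt),
      IsMap X S α → IsMap X T β → (∀ e, σ (α e) = τ (β e)) →
      ∃! h : X.Evt → (Interaction S T A σ τ).Evt,
        IsMap X (Interaction S T A σ τ) h ∧
        (∀ e, InterPi1 S T A σ τ (h e) = α e) ∧
        (∀ e, InterPi2 S T A σ τ (h e) = β e) := by
  classical
  refine ⟨fun G => G.prop.1.2.2.1 _ (primeTop_mem G), ⟨?_, ?_⟩, ⟨?_, ?_⟩, ?_⟩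
  · -- Π₁ preserves configurations
    intro y hy
    have hU : IsSecBij S T A σ τ (⋃ G ∈ y, G.val) := (hy.2.1 y subset_rfl hy.1).2
    rw [(proj_img hσ hτ hy).1]
    exact hU.1
  · -- Π₁ injective on configurations
    intro y hy G hG G' hG' heq
    have hU : IsSecBij S T A σ τ (⋃ G ∈ y, G.val) := (hy.2.1 y subset_rfl hy.1).2
    have hGU : G.val ⊆ ⋃ G ∈ y, G.val := fun q hq => Set.mem_biUnion hG hq
    have hG'U : G'.val ⊆ ⋃ G ∈ y, G.val := fun q hq => Set.mem_biUnion hG' hq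
    have hpp : primeTop S T A σ τ G = primeTop S T A σ τ G' :=
      sb_fst_inj hτ hU (hGU (primeTop_mem G)) (hG'U (primeTop_mem G')) heq
    apply Subtype.ext
    rw [prime_eq_downIn hσ hτ hU G.prop.1 hGU (primeTop_mem G) (primeTop_top G),
      prime_eq_downIn hσ hτ hU G'.prop.1 hG'U (primeTop_mem G') (primeTop_top G'), hpp]
  · -- Π₂ preserves configurations
    intro y hy
    have hU : IsSecBij S T A σ τ (⋃ G ∈ y, G.val) := (hy.2.1 y subset_rfl hy.1).2
    rw [(proj_img hσ hτ hy).2]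
    exact hU.2.1
  · -- Π₂ injective on configurations
    intro y hy G hG G' hG' heq
    have hU : IsSecBij S T A σ τ (⋃ G ∈ y, G.val) := (hy.2.1 y subset_rfl hy.1).2
    have hGU : G.val ⊆ ⋃ G ∈ y, G.val := fun q hq => Set.mem_biUnion hG hq
    have hG'U : G'.val ⊆ ⋃ G ∈ y, G.val := fun q hq => Set.mem_biUnion hG' hq
    have hpp : primeTop S T A σ τ G = primeTop S T A σ τ G' :=
      sb_snd_inj hσ hU (hGU (primeTop_mem G)) (hG'U (primeTop_mem G')) heq
    apply Subtype.ext
    rw [prime_eq_downIn hσ hτ hU G.prop.1 hGU (primeTop_mem G) (primeTop_top G),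
      prime_eq_downIn hσ hτ hU G'.prop.1 hG'U (primeTop_mem G') (primeTop_top G'), hpp]
  · -- universal property
    intro X hX α β hα hβ hcompat
    have hDcfg : ∀ e, X.Config {e' | X.le e' e} := cfg_down hX
    have hDsub : ∀ {e e' : X.Evt}, X.le e' e →
        {a | X.le a e'} ⊆ {a | X.le a e} := fun h a ha => hX.2.1 _ _ _ ha h
    -- the graph of the causal history of `e`
    have hG0 : ∀ e : X.Evt,
        IsSecBij S T A σ τ ((fun a => (α a, β a)) '' {e' | X.le e' e}) := by
      intro e
      refine union_sb hX hσ hα hβ hcompat (hDcfg e) subset_rfl ?_ ?_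
      · rintro p ⟨a, ha, rfl⟩ s' hs'
        obtain ⟨c, hc, hc1⟩ := (hα.1 _ (hDcfg e)).2.2 (α a) ⟨a, ha, rfl⟩ s' hs'
        exact ⟨(α c, β c), ⟨c, hc, rfl⟩, hc1⟩
      · rintro p ⟨a, ha, rfl⟩ t' ht'
        obtain ⟨c, hc, hc1⟩ := (hβ.1 _ (hDcfg e)).2.2 (β a) ⟨a, ha, rfl⟩ t' ht'
        exact ⟨(α c, β c), ⟨c, hc, rfl⟩, hc1⟩
    have hFe : ∀ e : X.Evt,
        (α e, β e) ∈ (fun a => (α a, β a)) '' {e' | X.le e' e} :=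
      fun e => ⟨e, hX.1 e, rfl⟩
    have hds := fun e => down_sec hσ hτ (hG0 e) (hFe e)
    set h : X.Evt → (Interaction S T A σ τ).Evt := fun e =>
      ⟨downIn ((fun a => (α a, β a)) '' {e' | X.le e' e}) (α e, β e),
       (hds e).1, (α e, β e), (hds e).2.1, (hds e).2.2⟩ with hh
    have htoph : ∀ e, primeTop S T A σ τ (h e) = (α e, β e) :=
      fun e => primeTop_eq (h e) (hds e).2.1 (hds e).2.2
    -- unions of values of `h` over subsets of a configuration are secured bijections
    have hUz : ∀ x, X.Config x → ∀ z, z ⊆ x →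
        IsSecBij S T A σ τ (⋃ e ∈ z, (h e).val) := by
      intro x hx z hz
      refine union_sb hX hσ hα hβ hcompat hx ?_ ?_ ?_
      · intro q hq
        obtain ⟨e, he, hqe⟩ := Set.mem_iUnion₂.1 hq
        obtain ⟨a, ha, rfl⟩ := downIn_subset _ _ hqe
        exact ⟨a, hx.2.2 e (hz he) a ha, rfl⟩
      · intro p hp s' hs'
        obtain ⟨e, he, hpe⟩ := Set.mem_iUnion₂.1 hp
        obtain ⟨q, hq, hq1⟩ := ((hds e).1.1).2.2 p.1 ⟨p, hpe, rfl⟩ s' hs'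
        exact ⟨q, Set.mem_biUnion he hq, hq1⟩
      · intro p hp t' ht'
        obtain ⟨e, he, hpe⟩ := Set.mem_iUnion₂.1 hp
        obtain ⟨q, hq, hq1⟩ := ((hds e).1.2.1).2.2 p.2 ⟨p, hpe, rfl⟩ t' ht'
        exact ⟨q, Set.mem_biUnion he hq, hq1⟩
    have hmap : IsMap X (Interaction S T A σ τ) h := by
      constructor
      · intro x hx
        refine ⟨hx.1.image h, ?_, ?_⟩
        · intro Y hY hYf
          refine ⟨hYf, ?_⟩
          have hYeq : (⋃ G ∈ Y, (G : (Interaction S T A σ τ).Evt).val) =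
              ⋃ e ∈ {e | e ∈ x ∧ h e ∈ Y}, (h e).val := by
            ext q
            rw [Set.mem_iUnion₂, Set.mem_iUnion₂]
            constructor
            · rintro ⟨G, hG, hq⟩
              obtain ⟨e, he, rfl⟩ := hY hG
              exact ⟨e, ⟨he, hG⟩, hq⟩
            · rintro ⟨e, ⟨he, hY'⟩, hq⟩
              exact ⟨h e, hY', hq⟩
          have hres := hUz x hx {e | e ∈ x ∧ h e ∈ Y} (fun e he => he.1)
          rwa [← hYeq] at hres
        · rintro G ⟨e, he, rfl⟩ G' hle
          have hpmem : primeTop S T A σ τ G' ∈ (h e).val := hle (primeTop_mem G')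
          obtain ⟨a, ha, hpa⟩ := downIn_subset _ _ hpmem
          have hax : a ∈ x := hx.2.2 e he a ha
          have hsubGe : G'.val ⊆ (fun a => (α a, β a)) '' {e' | X.le e' e} :=
            hle.trans (downIn_subset _ _)
          have h1 : G'.val =
              downIn ((fun a => (α a, β a)) '' {e' | X.le e' e}) (primeTop S T A σ τ G') :=
            prime_eq_downIn hσ hτ (hG0 e) G'.prop.1 hsubGe (primeTop_mem G') (primeTop_top G')
          have hha : (h a).val ⊆ (fun a => (α a, β a)) '' {e' | X.le e' e} :=
            (downIn_subset _ _).trans (Set.image_mono (hDsub ha))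
          have h2 : (h a).val =
              downIn ((fun a => (α a, β a)) '' {e' | X.le e' e}) (α a, β a) :=
            prime_eq_downIn hσ hτ (hG0 e) (h a).prop.1 hha (hds a).2.1 (hds a).2.2
          have hG'ha : G' = h a := Subtype.ext (by rw [h1, h2, ← hpa])
          exact ⟨a, hax, hG'ha.symm⟩
      · intro x hx e he e' he' heq
        have hpe := congrArg (primeTop S T A σ τ) heq
        rw [htoph e, htoph e'] at hpe
        exact hα.2 x hx he he' (congrArg Prod.fst hpe)
    refine ⟨h, ⟨hmap, fun e => ?_, fun e => ?_⟩, ?_⟩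
    · show (primeTop S T A σ τ (h e)).1 = α e
      rw [htoph e]
    · show (primeTop S T A σ τ (h e)).2 = β e
      rw [htoph e]
    · rintro h' ⟨hmap', hp1', hp2'⟩
      funext e
      apply Subtype.ext
      have htop' : primeTop S T A σ τ (h' e) = (α e, β e) :=
        Prod.ext (hp1' e) (hp2' e)
      have hcfgD := hDcfg e
      have hy := hmap'.1 _ hcfgD
      have hU' : IsSecBij S T A σ τ (⋃ G ∈ h' '' {e' | X.le e' e}, G.val) :=
        (hy.2.1 _ subset_rfl hy.1).2
      have himg := proj_img hσ hτ hy
      have himg1 : Prod.fst '' (⋃ G ∈ h' '' {e' | X.le e' e}, G.val) =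
          α '' {e' | X.le e' e} := by
        rw [← himg.1, Set.image_image]
        exact Set.image_congr (fun a _ => hp1' a)
      have himg2 : Prod.snd '' (⋃ G ∈ h' '' {e' | X.le e' e}, G.val) =
          β '' {e' | X.le e' e} := by
        rw [← himg.2, Set.image_image]
        exact Set.image_congr (fun a _ => hp2' a)
      have hsubU : (h' e).val ⊆ ⋃ G ∈ h' '' {e' | X.le e' e}, G.val :=
        fun q hq => Set.mem_biUnion ⟨e, hX.1 e, rfl⟩ hq
      have hsub0 : (h' e).val ⊆ (fun a => (α a, β a)) '' {e' | X.le e' e} := by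
        intro q hq
        have hq1 : q.1 ∈ α '' {e' | X.le e' e} := himg1 ▸ ⟨q, hsubU hq, rfl⟩
        have hq2 : q.2 ∈ β '' {e' | X.le e' e} := himg2 ▸ ⟨q, hsubU hq, rfl⟩
        obtain ⟨a, ha, ha1⟩ := hq1
        obtain ⟨b, hb, hb2⟩ := hq2
        have hc3 := hU'.2.2.1 q (hsubU hq)
        have hσab : σ (α a) = σ (α b) := by
          rw [ha1, hc3, ← hb2, ← hcompat b]
        have hab' : α a = α b := hσ.2 _ (hα.1 _ hcfgD) ⟨a, ha, rfl⟩ ⟨b, hb, rfl⟩ hσab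
        have hab : a = b := hα.2 _ hcfgD ha hb hab'
        subst hab
        exact ⟨a, ha, Prod.ext ha1 hb2⟩
      have heq1 : (h' e).val =
          downIn ((fun a => (α a, β a)) '' {e' | X.le e' e}) (α e, β e) := by
        rw [← htop']
        exact prime_eq_downIn hσ hτ (hG0 e) (h' e).prop.1 hsub0
          (primeTop_mem (h' e)) (primeTop_top (h' e))
      rw [heq1]
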